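/- The pretentious distance is subadditive under pointwise products: for all multiplicative functions f₁, f₂, g₁, g₂ with values in the closed unit disc and all N ∈ ℕ, D(f₁f₂, g₁g₂; N) ≤ D(f₁, g₁; N) + D(f₂, g₂; N). -/

import Mathlib

open Finset Complex

private lemma key_ineq (A B : ℂ) (hA : ‖A‖ ≤ 1) (hB : ‖B‖ ≤ 1) :
    1 - (A * B).re ≤ (1 - A.re) + (1 - B.re) + 2 * Real.sqrt ((1 - A.re) * (1 - B.re)) := by
  have hAsq : A.re ^ 2 + A.im ^ 2 ≤ 1 := by
    have := Complex.sq_norm A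
    rw [Complex.normSq_apply] at this
    nlinarith [norm_nonneg A]
  have hBsq : B.re ^ 2 + B.im ^ 2 ≤ 1 := by
    have := Complex.sq_norm B
    rw [Complex.normSq_apply] at this
    nlinarith [norm_nonneg B]
  have hAre : 0 ≤ 1 - A.re := by nlinarith [sq_nonneg A.im, sq_nonneg (A.re - 1)]
  have hBre : 0 ≤ 1 - B.re := by nlinarith [sq_nonneg B.im, sq_nonneg (B.re - 1)]
  have hA2 : A.im ^ 2 ≤ 2 * (1 - A.re) := by nlinarith
  have hB2 : B.im ^ 2 ≤ 2 * (1 - B.re) := by nlinarith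
  have him : A.im * B.im ≤ 2 * Real.sqrt ((1 - A.re) * (1 - B.re)) := by
    calc A.im * B.im ≤ Real.sqrt (A.im ^ 2) * Real.sqrt (B.im ^ 2) := by
          rw [Real.sqrt_sq_eq_abs, Real.sqrt_sq_eq_abs]
          calc A.im * B.im ≤ |A.im * B.im| := le_abs_self _
            _ = |A.im| * |B.im| := abs_mul _ _
      _ ≤ Real.sqrt (2 * (1 - A.re)) * Real.sqrt (2 * (1 - B.re)) :=
          mul_le_mul (Real.sqrt_le_sqrt hA2) (Real.sqrt_le_sqrt hB2)
            (Real.sqrt_nonneg _) (Real.sqrt_nonneg _)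
      _ = Real.sqrt ((2 * (1 - A.re)) * (2 * (1 - B.re))) :=
          (Real.sqrt_mul (by linarith) _).symm
      _ = Real.sqrt (4 * ((1 - A.re) * (1 - B.re))) := by ring_nf
      _ = 2 * Real.sqrt ((1 - A.re) * (1 - B.re)) := by
          rw [Real.sqrt_mul (by norm_num), show Real.sqrt 4 = 2 by
            rw [show (4:ℝ) = 2 ^ 2 by norm_num, Real.sqrt_sq (by norm_num)]]
  rw [Complex.mul_re]
  nlinarith [mul_nonneg hAre hBre]

theorem stmt3 (f₁ f₂ g₁ g₂ : ℕ → ℂ)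
    (hf₁ : ∀ m n : ℕ, Nat.Coprime m n → f₁ (m * n) = f₁ m * f₁ n)
    (hf₂ : ∀ m n : ℕ, Nat.Coprime m n → f₂ (m * n) = f₂ m * f₂ n)
    (hg₁ : ∀ m n : ℕ, Nat.Coprime m n → g₁ (m * n) = g₁ m * g₁ n)
    (hg₂ : ∀ m n : ℕ, Nat.Coprime m n → g₂ (m * n) = g₂ m * g₂ n)
    (hbf₁ : ∀ n, ‖f₁ n‖ ≤ 1) (hbf₂ : ∀ n, ‖f₂ n‖ ≤ 1)
    (hbg₁ : ∀ n, ‖g₁ n‖ ≤ 1) (hbg₂ : ∀ n, ‖g₂ n‖ ≤ 1)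
    (N : ℕ)
    (D : (ℕ → ℂ) → (ℕ → ℂ) → ℝ)
    (hD : ∀ u v : ℕ → ℂ, D u v =
      Real.sqrt (∑ p ∈ (Finset.range (N + 1)).filter Nat.Prime,
        (1 - (u p * (starRingEnd ℂ) (v p)).re) / p)) :
    D (fun n => f₁ n * f₂ n) (fun n => g₁ n * g₂ n) ≤ D f₁ g₁ + D f₂ g₂ := by
  rw [hD, hD, hD]
  set s := (Finset.range (N + 1)).filter Nat.Prime with hs
  set b : ℕ → ℝ := fun p => (1 - (f₁ p * (starRingEnd ℂ) (g₁ p)).re) / p with hb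
  set c : ℕ → ℝ := fun p => (1 - (f₂ p * (starRingEnd ℂ) (g₂ p)).re) / p with hc
  set a : ℕ → ℝ := fun p =>
    (1 - ((f₁ p * f₂ p) * (starRingEnd ℂ) (g₁ p * g₂ p)).re) / p with ha
  have habs : ∀ (u v : ℕ → ℂ), (∀ n, ‖u n‖ ≤ 1) → (∀ n, ‖v n‖ ≤ 1) →
      ∀ p : ℕ, ‖u p * (starRingEnd ℂ) (v p)‖ ≤ 1 := by
    intro u v hu hv p
    rw [norm_mul, Complex.norm_conj]
    exact mul_le_one₀ (hu p) (norm_nonneg _) (hv p)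
  have hbnn : ∀ p, 0 ≤ b p := by
    intro p
    apply div_nonneg _ (Nat.cast_nonneg p)
    have := (Complex.abs_re_le_norm (f₁ p * (starRingEnd ℂ) (g₁ p))).trans
      (habs f₁ g₁ hbf₁ hbg₁ p)
    have := neg_abs_le (f₁ p * (starRingEnd ℂ) (g₁ p)).re
    linarith [le_abs_self (f₁ p * (starRingEnd ℂ) (g₁ p)).re]
  have hcnn : ∀ p, 0 ≤ c p := by
    intro p
    apply div_nonneg _ (Nat.cast_nonneg p)
    have := (Complex.abs_re_le_norm (f₂ p * (starRingEnd ℂ) (g₂ p))).trans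
      (habs f₂ g₂ hbf₂ hbg₂ p)
    linarith [le_abs_self (f₂ p * (starRingEnd ℂ) (g₂ p)).re]
  have hpoint : ∀ p ∈ s, a p ≤ b p + c p + 2 * Real.sqrt (b p * c p) := by
    intro p hp
    have hpprime : Nat.Prime p := (Finset.mem_filter.mp hp).2
    have hppos : (0:ℝ) < p := by exact_mod_cast hpprime.pos
    set A := f₁ p * (starRingEnd ℂ) (g₁ p)
    set B := f₂ p * (starRingEnd ℂ) (g₂ p)
    have hprod : (f₁ p * f₂ p) * (starRingEnd ℂ) (g₁ p * g₂ p) = A * B := by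
      simp only [map_mul, A, B]; ring
    have hkey := key_ineq A B (habs f₁ g₁ hbf₁ hbg₁ p) (habs f₂ g₂ hbf₂ hbg₂ p)
    have hAre : 0 ≤ 1 - A.re := by
      have := (Complex.abs_re_le_norm A).trans (habs f₁ g₁ hbf₁ hbg₁ p)
      linarith [le_abs_self A.re]
    have hBre : 0 ≤ 1 - B.re := by
      have := (Complex.abs_re_le_norm B).trans (habs f₂ g₂ hbf₂ hbg₂ p)
      linarith [le_abs_self B.re]
    have hsqrt : Real.sqrt (b p * c p) = Real.sqrt ((1 - A.re) * (1 - B.re)) / p := by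
      have : b p * c p = ((1 - A.re) * (1 - B.re)) / p ^ 2 := by
        show (1 - A.re) / p * ((1 - B.re) / p) = _
        rw [div_mul_div_comm, ← sq]
      rw [this, Real.sqrt_div (mul_nonneg hAre hBre), Real.sqrt_sq hppos.le]
    simp only [ha, hb, hc, hprod]
    rw [hsqrt]
    rw [← add_div, ← mul_div_assoc, ← add_div, div_le_div_iff₀ hppos hppos]
    nlinarith [hkey, hppos]
  have hsum : ∑ p ∈ s, a p ≤ ∑ p ∈ s, b p + ∑ p ∈ s, c p +
      2 * (Real.sqrt (∑ p ∈ s, b p) * Real.sqrt (∑ p ∈ s, c p)) := by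
    have h1 : ∑ p ∈ s, a p ≤ ∑ p ∈ s, (b p + c p + 2 * Real.sqrt (b p * c p)) :=
      Finset.sum_le_sum hpoint
    have h2 : ∑ p ∈ s, Real.sqrt (b p) * Real.sqrt (c p) ≤
        Real.sqrt (∑ p ∈ s, b p) * Real.sqrt (∑ p ∈ s, c p) := by
      have hcs := Finset.sum_mul_sq_le_sq_mul_sq s (fun p => Real.sqrt (b p))
        (fun p => Real.sqrt (c p))
      simp only [Real.sq_sqrt (hbnn _), Real.sq_sqrt (hcnn _)] at hcs
      have hnn : 0 ≤ ∑ p ∈ s, Real.sqrt (b p) * Real.sqrt (c p) :=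
        Finset.sum_nonneg fun p _ => mul_nonneg (Real.sqrt_nonneg _) (Real.sqrt_nonneg _)
      calc ∑ p ∈ s, Real.sqrt (b p) * Real.sqrt (c p)
          = Real.sqrt ((∑ p ∈ s, Real.sqrt (b p) * Real.sqrt (c p)) ^ 2) :=
            (Real.sqrt_sq hnn).symm
        _ ≤ Real.sqrt ((∑ p ∈ s, b p) * ∑ p ∈ s, c p) := Real.sqrt_le_sqrt hcs
        _ = Real.sqrt (∑ p ∈ s, b p) * Real.sqrt (∑ p ∈ s, c p) :=
            Real.sqrt_mul (Finset.sum_nonneg fun p _ => hbnn p) _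
    have h3 : ∀ p ∈ s, Real.sqrt (b p * c p) = Real.sqrt (b p) * Real.sqrt (c p) :=
      fun p _ => Real.sqrt_mul (hbnn p) _
    have h1' : ∑ p ∈ s, a p ≤
        ∑ p ∈ s, b p + ∑ p ∈ s, c p + 2 * ∑ p ∈ s, Real.sqrt (b p) * Real.sqrt (c p) := by
      calc ∑ p ∈ s, a p ≤ ∑ p ∈ s, (b p + c p + 2 * Real.sqrt (b p * c p)) := h1
        _ = ∑ p ∈ s, (b p + c p + 2 * (Real.sqrt (b p) * Real.sqrt (c p))) :=
            Finset.sum_congr rfl (fun p hp => by rw [h3 p hp])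
        _ = _ := by
            rw [Finset.sum_add_distrib, Finset.sum_add_distrib, ← Finset.mul_sum]
    linarith
  have hBnn : 0 ≤ ∑ p ∈ s, b p := Finset.sum_nonneg fun p _ => hbnn p
  have hCnn : 0 ≤ ∑ p ∈ s, c p := Finset.sum_nonneg fun p _ => hcnn p
  calc Real.sqrt (∑ p ∈ s, a p)
      ≤ Real.sqrt ((Real.sqrt (∑ p ∈ s, b p) + Real.sqrt (∑ p ∈ s, c p)) ^ 2) := by
        apply Real.sqrt_le_sqrt
        rw [add_sq, Real.sq_sqrt hBnn, Real.sq_sqrt hCnn]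
        linarith
    _ = Real.sqrt (∑ p ∈ s, b p) + Real.sqrt (∑ p ∈ s, c p) :=
        Real.sqrt_sq (by positivity)
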